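/- G_{f₀} is topologically transitive on (𝒳,d): for any nonempty open sets U, V ⊆ 𝒳 there exists k ∈ ℕ with G_{f₀}^k(U) ∩ V ≠ ∅. -/

import Mathlib

open scoped BigOperators
open MeasureTheory ProbabilityTheory

namespace CI

/-- Strategies: sequences with values in {1,…,N}, encoded as `Fin N`. -/
abbrev Strat (N : ℕ) := ℕ → Fin N
/-- States of the system: boolean vectors of length N. -/
abbrev CState (N : ℕ) := Fin N → Bool
/-- The phase space 𝒳 = {1,…,N}^ℕ × 𝔹^N. -/
abbrev Pt (N : ℕ) := Strat N × CState N

/-- d_e : sum of the discrete metric over the coordinates. -/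
noncomputable def de {N : ℕ} (E F : CState N) : ℝ :=
  ∑ k : Fin N, if E k = F k then (0 : ℝ) else 1

/-- d_s(S,Š) = (9/N) Σ_{k≥1} |S^k − Š^k| / 10^k  (indices shifted to start at 0). -/
noncomputable def ds (N : ℕ) (S T : Strat N) : ℝ :=
  (9 / N) * ∑' k : ℕ, |((S k : ℝ)) - ((T k : ℝ))| / 10 ^ (k + 1)

/-- The distance d = d_e + d_s on 𝒳. -/
noncomputable def dC {N : ℕ} (p q : Pt N) : ℝ := de p.2 q.2 + ds N p.1 q.1

/-- Flip bit k of the state E. -/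
def bflip {N : ℕ} (k : Fin N) (E : CState N) : CState N :=
  fun j => if j = k then !(E j) else E j

/-- F_f(k,E): equal to E except possibly in coordinate k, where it is f(E)_k. -/
def Ff {N : ℕ} (f : CState N → CState N) (k : Fin N) (E : CState N) : CState N :=
  fun j => if j = k then f E k else E j

/-- The chaotic-iterations map G_f(S,E) = (σ(S), F_f(S^0,E)). -/
def Gf {N : ℕ} (f : CState N → CState N) (p : Pt N) : Pt N :=
  (fun n => p.1 (n + 1), Ff f (p.1 0) p.2)

/-- The vectorial negation f₀. -/
def f0 {N : ℕ} (E : CState N) : CState N := fun j => !(E j)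

/-- G_{f₀}. -/
def G0 {N : ℕ} : Pt N → Pt N := Gf f0

/-- Open ball for the distance dC. -/
def ballC {N : ℕ} (x : Pt N) (r : ℝ) : Set (Pt N) := {y | dC x y < r}

/-- Open sets of the metric space (𝒳,d). -/
def IsOpenC {N : ℕ} (U : Set (Pt N)) : Prop := ∀ x ∈ U, ∃ ε > 0, ballC x ε ⊆ U

/-- Iterating the flip-one-coordinate dynamics along a strategy. -/
def runCI {N : ℕ} (S : ℕ → Fin N) (E : CState N) : ℕ → CState N
  | 0 => E
  | n + 1 => bflip (S n) (runCI S E n)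

/-- The CIDS (cover-dependent) strategy: S^k = k if k ≤ N and X_k = 1, else S^k = 1
(indices encoded from 0, so "1" is `0 : Fin N`). -/
def cids {N : ℕ} [NeZero N] (X : CState N) : ℕ → Fin N :=
  fun k => if h : k < N then (if X ⟨k, h⟩ then ⟨k, h⟩ else 0) else 0


lemma Ff_f0 {N : ℕ} (k : Fin N) (E : CState N) : Ff f0 k E = bflip k E := by
  funext j
  simp only [Ff, bflip, f0]
  rcases eq_or_ne j k with h | h
  · subst h; simp
  · simp [h]

lemma runCI_shift {N : ℕ} (S : Strat N) (E : CState N) (k : ℕ) :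
    runCI S E (k + 1) = runCI (fun n => S (n + 1)) (bflip (S 0) E) k := by
  induction k with
  | zero => rfl
  | succ k ih =>
    show bflip (S (k + 1)) (runCI S E (k + 1)) = bflip (S (k + 1)) _
    rw [ih]

lemma runCI_congr {N : ℕ} {S T : Strat N} (E : CState N) (n : ℕ)
    (h : ∀ i < n, S i = T i) : runCI S E n = runCI T E n := by
  induction n with
  | zero => rfl
  | succ n ih =>
    show bflip (S n) (runCI S E n) = bflip (T n) (runCI T E n)
    rw [h n (by omega), ih (fun i hi => h i (by omega))]

lemma runCI_add {N : ℕ} (S : Strat N) (E : CState N) (a b : ℕ) :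
    runCI S E (a + b) = runCI (fun n => S (n + a)) (runCI S E a) b := by
  induction b with
  | zero => rfl
  | succ b ih =>
    have h1 : a + (b + 1) = (a + b) + 1 := by omega
    rw [h1]
    show bflip (S (a + b)) (runCI S E (a + b)) = bflip (S (b + a)) _
    rw [ih, Nat.add_comm a b]

lemma G0_iter {N : ℕ} (S : Strat N) (E : CState N) (k : ℕ) :
    G0^[k] (S, E) = (fun n => S (n + k), runCI S E k) := by
  induction k with
  | zero => simp [runCI]
  | succ k ih =>
    rw [Function.iterate_succ_apply', ih]
    show Gf f0 _ = _
    unfold Gf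
    refine Prod.ext ?_ ?_
    · funext n; show S (n + 1 + k) = S (n + (k + 1)); congr 1; omega
    · show Ff f0 (S (0 + k)) (runCI S E k) = runCI S E (k + 1)
      rw [Ff_f0]
      show bflip (S (0 + k)) (runCI S E k) = bflip (S k) (runCI S E k)
      rw [Nat.zero_add]

lemma bridge {N : ℕ} [NeZero N] : ∀ (d : ℕ) (A B : CState N),
    (Finset.univ.filter (fun j => A j ≠ B j)).card = d →
    ∃ m : ℕ, ∃ L : Strat N, runCI L A m = B := by
  intro d
  induction d using Nat.strong_induction_on with
  | _ d ih =>
    intro A B hd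
    rcases Nat.eq_zero_or_pos d with h0 | hpos
    · have hA : A = B := by
        funext j
        by_contra hj
        have hmem : j ∈ Finset.univ.filter (fun j => A j ≠ B j) := by
          simp [hj]
        have := Finset.card_pos.mpr ⟨j, hmem⟩
        omega
      exact ⟨0, fun _ => 0, hA⟩
    · have hne : (Finset.univ.filter (fun j => A j ≠ B j)).Nonempty := by
        rw [← Finset.card_pos]; omega
      obtain ⟨k, hk⟩ := hne
      have hk' : A k ≠ B k := by simpa using hk
      set A' := bflip k A with hA'
      have hflip : A' k = B k := by
        simp only [hA', bflip, if_pos rfl]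
        revert hk'; cases A k <;> cases B k <;> simp
      have hfilter : (Finset.univ.filter (fun j => A' j ≠ B j))
          = (Finset.univ.filter (fun j => A j ≠ B j)).erase k := by
        ext j
        simp only [Finset.mem_filter, Finset.mem_erase, Finset.mem_univ, true_and, ne_eq]
        rcases eq_or_ne j k with h | h
        · rw [h]; simp [hflip]
        · have : A' j = A j := by simp [hA', bflip, h]
          rw [this]
          tauto
      have hcard : (Finset.univ.filter (fun j => A' j ≠ B j)).card < d := by
        rw [hfilter, Finset.card_erase_of_mem hk, hd]
        omega
      obtain ⟨m, L, hL⟩ := ih _ hcard A' B rfl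
      refine ⟨m + 1, fun n => if n = 0 then k else L (n - 1), ?_⟩
      rw [runCI_shift]
      simp only [if_pos rfl, Nat.add_eq_zero, Nat.succ_ne_zero, and_false, if_false,
        Nat.add_sub_cancel]
      exact hL

lemma de_self {N : ℕ} (E : CState N) : de E E = 0 := by simp [de]

lemma ds_self (N : ℕ) (T : Strat N) : ds N T T = 0 := by simp [ds]

lemma summable_dsterm {N : ℕ} (S T : Strat N) :
    Summable (fun k : ℕ => |((S k : ℝ)) - ((T k : ℝ))| / 10 ^ (k + 1)) := by
  have hg : Summable (fun k : ℕ => (N : ℝ) * (1 / 10) ^ (k + 1)) := by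
    have h := summable_geometric_of_lt_one (by norm_num : (0:ℝ) ≤ 1/10)
      (by norm_num : (1/10 : ℝ) < 1)
    have := h.mul_left ((N : ℝ) * (1 / 10))
    refine this.congr fun k => ?_
    rw [pow_succ]; ring
  refine Summable.of_nonneg_of_le (fun k => by positivity) (fun k => ?_) hg
  have hS : (S k : ℝ) < N := by exact_mod_cast (S k).isLt
  have hT : (T k : ℝ) < N := by exact_mod_cast (T k).isLt
  have hS0 : (0:ℝ) ≤ (S k : ℝ) := by positivity
  have hT0 : (0:ℝ) ≤ (T k : ℝ) := by positivity
  have habs : |((S k : ℝ)) - ((T k : ℝ))| ≤ N := by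
    rw [abs_sub_le_iff]; constructor <;> linarith
  have h10 : (0:ℝ) < 10 ^ (k + 1) := by positivity
  calc |((S k : ℝ)) - ((T k : ℝ))| / 10 ^ (k + 1) ≤ (N : ℝ) / 10 ^ (k + 1) := by
        gcongr
      _ = (N : ℝ) * (1 / 10) ^ (k + 1) := by
        rw [one_div, inv_pow, ← div_eq_mul_inv]

lemma ds_le {N : ℕ} [NeZero N] (S T : Strat N) (n : ℕ) (h : ∀ i < n, S i = T i) :
    ds N S T ≤ (1 / 10 : ℝ) ^ n := by
  have hNpos : (0:ℝ) < N := by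
    exact_mod_cast Nat.pos_of_ne_zero (NeZero.ne N)
  set f := fun k : ℕ => |((S k : ℝ)) - ((T k : ℝ))| / 10 ^ (k + 1) with hf
  have hsf : Summable f := summable_dsterm S T
  have hgeo := summable_geometric_of_lt_one (by norm_num : (0:ℝ) ≤ 1/10)
    (by norm_num : (1/10 : ℝ) < 1)
  have hg : Summable (fun k : ℕ => ((N : ℝ) * (1/10) ^ (n + 1)) * (1/10) ^ k) :=
    hgeo.mul_left _
  have hbound : ∀ k : ℕ, f (k + n) ≤ ((N : ℝ) * (1/10) ^ (n + 1)) * (1/10) ^ k := by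
    intro k
    have hS : (S (k + n) : ℝ) < N := by exact_mod_cast (S (k + n)).isLt
    have hT : (T (k + n) : ℝ) < N := by exact_mod_cast (T (k + n)).isLt
    have hS0 : (0:ℝ) ≤ (S (k + n) : ℝ) := by positivity
    have hT0 : (0:ℝ) ≤ (T (k + n) : ℝ) := by positivity
    have habs : |((S (k + n) : ℝ)) - ((T (k + n) : ℝ))| ≤ N := by
      rw [abs_sub_le_iff]; constructor <;> linarith
    have : f (k + n) ≤ (N : ℝ) / 10 ^ (k + n + 1) := by
      simp only [hf]; gcongr
    refine this.trans (le_of_eq ?_)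
    rw [one_div, inv_pow, inv_pow]
    have hpow : (10:ℝ) ^ (k + n + 1) = 10 ^ (n + 1) * 10 ^ k := by
      rw [← pow_add]; congr 1; omega
    rw [hpow, div_eq_mul_inv, mul_inv, ← mul_assoc]
  have hsum0 : ∑ i ∈ Finset.range n, f i = 0 := by
    refine Finset.sum_eq_zero fun i hi => ?_
    have := h i (Finset.mem_range.mp hi)
    simp [hf, this]
  have htsum : ∑' k, f k = ∑' k, f (k + n) := by
    rw [← Summable.sum_add_tsum_nat_add n hsf, hsum0, zero_add]
  have h2 : ∑' k, f (k + n) ≤ ∑' k : ℕ, ((N : ℝ) * (1/10) ^ (n + 1)) * (1/10) ^ k := by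
    refine Summable.tsum_le_tsum hbound ?_ hg
    exact (summable_nat_add_iff n).mpr hsf
  have h3 : ∑' k : ℕ, ((N : ℝ) * (1/10) ^ (n + 1)) * (1/10) ^ k
      = (N : ℝ) * (1/10) ^ (n + 1) * (10 / 9) := by
    rw [tsum_mul_left, tsum_geometric_of_lt_one (by norm_num) (by norm_num)]
    norm_num
  have hfinal : ∑' k, f k ≤ (N : ℝ) * (1/10) ^ (n + 1) * (10 / 9) := by
    rw [htsum]; exact h2.trans (le_of_eq h3)
  have key : ds N S T ≤ (9 / N) * ((N : ℝ) * (1/10) ^ (n + 1) * (10 / 9)) := by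
    rw [ds]
    exact mul_le_mul_of_nonneg_left hfinal (by positivity)
  refine key.trans (le_of_eq ?_)
  rw [pow_succ]
  field_simp


theorem stmt10 {N : ℕ} [NeZero N] :
    ∀ U V : Set (Pt N), IsOpenC U → IsOpenC V → U.Nonempty → V.Nonempty →
      ∃ k : ℕ, ((G0^[k] '' U) ∩ V).Nonempty := by
  intro U V hU hV hUne hVne
  obtain ⟨x, hxU⟩ := hUne
  obtain ⟨y, hyV⟩ := hVne
  obtain ⟨S, E⟩ := x
  obtain ⟨T, F⟩ := y
  obtain ⟨ε, hε, hballU⟩ := hU (S, E) hxU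
  obtain ⟨δ, hδ, hballV⟩ := hV (T, F) hyV
  obtain ⟨n₀, hn₀⟩ := exists_pow_lt_of_lt_one hε (by norm_num : (1/10 : ℝ) < 1)
  set A := runCI S E n₀ with hA
  obtain ⟨m, L, hL⟩ := bridge (N := N) _ A F rfl
  set k := n₀ + m with hk
  set S' : Strat N := fun n =>
    if n < n₀ then S n else if n < n₀ + m then L (n - n₀) else T (n - (n₀ + m)) with hS'
  -- x' ∈ U
  have hagree : ∀ i < n₀, S i = S' i := by
    intro i hi; simp [hS', hi]
  have hds : ds N S S' ≤ (1/10 : ℝ) ^ n₀ := ds_le S S' n₀ hagree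
  have hx'U : (S', E) ∈ U := by
    apply hballU
    show dC (S, E) (S', E) < ε
    have : dC (S, E) (S', E) = de E E + ds N S S' := rfl
    rw [this, de_self, zero_add]
    exact lt_of_le_of_lt hds hn₀
  -- the state after k steps is F
  have hstate : runCI S' E k = F := by
    have h1 : runCI S' E n₀ = A := by
      rw [hA]
      exact runCI_congr E n₀ (fun i hi => (hagree i hi).symm)
    rw [hk, runCI_add, h1]
    rw [← hL]
    refine runCI_congr A m (fun i hi => ?_)
    have h2 : ¬ (i + n₀ < n₀) := by omega
    have h3 : i + n₀ < n₀ + m := by omega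
    simp only [hS', h2, if_false, h3, if_true]
    congr 1
    omega
  -- the shifted strategy is T
  have hshift : (fun n => S' (n + k)) = T := by
    funext n
    have h1 : ¬ (n + k < n₀) := by omega
    have h2 : ¬ (n + k < n₀ + m) := by omega
    simp only [hS', h1, if_false, h2, if_false]
    congr 1
    omega
  refine ⟨k, G0^[k] (S', E), ⟨(S', E), hx'U, rfl⟩, ?_⟩
  apply hballV
  show dC (T, F) (G0^[k] (S', E)) < δ
  rw [G0_iter, hshift]
  have : dC (T, F) (T, runCI S' E k) = de F (runCI S' E k) + ds N T T := rfl
  rw [this, hstate, de_self, ds_self, add_zero]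
  exact hδ

end CI
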